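/- For j, m ∈ ℤ_{≥0}, the linear form ⟨(a⁻)^j k^m⟩₁₁ = ⟨χ̄₁(x)|(a⁻)^j k^m|χ₁(1)⟩ / ⟨χ̄₁(x)|χ₁(1)⟩ equals p^{m/2 + mj} (-p;p)_j (x;p)_m / (-px;p)_{j+m}. -/

import Mathlib

noncomputable def aMinus (p : ℝ) (v : ℕ → ℂ) : ℕ → ℂ := fun m =>
  ((Real.sqrt (1 - p ^ (2 * m + 2)) : ℝ) : ℂ) * v (m + 1)

noncomputable def kOp (p : ℝ) (v : ℕ → ℂ) : ℕ → ℂ := fun m =>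
  ((p : ℂ) ^ m * ((Real.sqrt p : ℝ) : ℂ)) * v m

noncomputable def qPoch (a q : ℝ) (m : ℕ) : ℝ := ∏ i ∈ Finset.range m, (1 - a * q ^ i)

noncomputable def chi1 (p x : ℝ) : ℕ → ℂ := fun m =>
  (x : ℂ) ^ m * ((Real.sqrt (qPoch (p ^ 2) (p ^ 2) m) : ℝ) : ℂ) / ((qPoch p p m : ℝ) : ℂ)

noncomputable def pairF (f g : ℕ → ℂ) : ℂ := ∑' n : ℕ, f n * g n

/-! ### Auxiliary development -/

/-- the summand of the basic hypergeometric series `₁φ₀`. -/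
noncomputable def qT (p a z : ℝ) (n : ℕ) : ℝ := qPoch a p n / qPoch p p n * z ^ n

/-- the basic hypergeometric series `₁φ₀(a;;p,z)`. -/
noncomputable def qF (p a z : ℝ) : ℝ := ∑' n, qT p a z n

lemma qPoch_pos {a q : ℝ} (ha : a < 1) (hq0 : 0 ≤ q) (hq1 : q ≤ 1) (n : ℕ) :
    0 < qPoch a q n := by
  apply Finset.prod_pos
  intro i _
  have hqi : q ^ i ≤ 1 := pow_le_one₀ hq0 hq1
  have hqi0 : 0 ≤ q ^ i := pow_nonneg hq0 i
  rcases le_or_gt a 0 with h | h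
  · nlinarith
  · nlinarith

lemma qPoch_succ (a q : ℝ) (n : ℕ) :
    qPoch a q (n + 1) = qPoch a q n * (1 - a * q ^ n) := Finset.prod_range_succ _ _

lemma qPoch_succ' (a q : ℝ) (n : ℕ) :
    qPoch a q (n + 1) = (1 - a) * qPoch (a * q) q n := by
  rw [qPoch, Finset.prod_range_succ']
  simp only [pow_zero, mul_one, qPoch]
  rw [mul_comm]
  congr 1
  apply Finset.prod_congr rfl
  intro i _
  ring

lemma qPoch_add (a q : ℝ) (s t : ℕ) :
    qPoch a q (s + t) = qPoch a q s * qPoch (a * q ^ s) q t := by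
  rw [qPoch, Finset.prod_range_add, qPoch, qPoch]
  congr 1
  apply Finset.prod_congr rfl
  intro i _
  ring

lemma qPoch_sq (p : ℝ) (n : ℕ) :
    qPoch (p ^ 2) (p ^ 2) n = qPoch p p n * qPoch (-p) p n := by
  rw [qPoch, qPoch, qPoch, ← Finset.prod_mul_distrib]
  apply Finset.prod_congr rfl
  intro i _
  ring

section Rec

variable {p a z : ℝ} (hp : 0 < p) (hp1 : p < 1)

include hp hp1

lemma qT_pos (ha : a < 1) (hz : 0 < z) (n : ℕ) : 0 < qT p a z n := by
  have h1 := qPoch_pos ha hp.le hp1.le n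
  have h2 := qPoch_pos hp1 hp.le hp1.le n
  exact mul_pos (div_pos h1 h2) (pow_pos hz n)

lemma summable_qT (ha : -1 ≤ a) (ha' : a ≤ 0) (hz : 0 < z) (hz1 : z < 1) :
    Summable (qT p a z) := by
  have ha1 : a < 1 := lt_of_le_of_lt ha' one_pos
  apply summable_of_ratio_norm_eventually_le (r := (1 + z) / 2) (by linarith)
  have htend : Filter.Tendsto (fun n : ℕ => (1 + p ^ n) / (1 - p ^ (n + 1)) * z)
      Filter.atTop (nhds z) := by
    have h0 : Filter.Tendsto (fun n : ℕ => p ^ n) Filter.atTop (nhds 0) :=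
      tendsto_pow_atTop_nhds_zero_of_lt_one hp.le hp1
    have h1 : Filter.Tendsto (fun n : ℕ => p ^ (n + 1)) Filter.atTop (nhds 0) := by
      simpa [Function.comp_def] using h0.comp (Filter.tendsto_add_atTop_nat 1)
    have := (((tendsto_const_nhds (x := (1:ℝ))).add h0).div
      ((tendsto_const_nhds (x := (1:ℝ))).sub h1) (by norm_num)).mul
      (tendsto_const_nhds (x := z))
    simpa using this
  have hev := htend.eventually_lt_const (show z < (1 + z) / 2 by linarith)
  filter_upwards [hev] with n hn
  have hpn1 : p ^ (n + 1) < 1 := pow_lt_one₀ hp.le hp1 n.succ_ne_zero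
  have hpn1' : (0:ℝ) < 1 - p ^ (n + 1) := by linarith
  have hpos := qT_pos hp hp1 ha1 hz n
  have hpos' := qT_pos hp hp1 ha1 hz (n + 1)
  rw [Real.norm_of_nonneg hpos.le, Real.norm_of_nonneg hpos'.le]
  have hrec : qT p a z (n + 1) = (1 - a * p ^ n) * z / (1 - p ^ (n + 1)) * qT p a z n := by
    have hq0 : qPoch p p n ≠ 0 := (qPoch_pos hp1 hp.le hp1.le n).ne'
    have hq1 : (1:ℝ) - p ^ n * p ≠ 0 := by rw [← pow_succ]; exact hpn1'.ne'
    rw [qT, qT, qPoch_succ, qPoch_succ, pow_succ]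
    field_simp
    ring
  rw [hrec]
  have hb : (1 - a * p ^ n) * z / (1 - p ^ (n + 1)) ≤ (1 + p ^ n) / (1 - p ^ (n + 1)) * z := by
    rw [div_le_iff₀ hpn1']
    have : 1 - a * p ^ n ≤ 1 + p ^ n := by nlinarith [pow_nonneg hp.le n]
    calc (1 - a * p ^ n) * z ≤ (1 + p ^ n) * z := by nlinarith
      _ = (1 + p ^ n) / (1 - p ^ (n + 1)) * z * (1 - p ^ (n + 1)) := by
          field_simp
  calc (1 - a * p ^ n) * z / (1 - p ^ (n + 1)) * qT p a z n
      ≤ ((1 + p ^ n) / (1 - p ^ (n + 1)) * z) * qT p a z n := by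
        exact mul_le_mul_of_nonneg_right hb hpos.le
    _ ≤ (1 + z) / 2 * qT p a z n := mul_le_mul_of_nonneg_right hn.le hpos.le

lemma qF_pos (ha : -1 ≤ a) (ha' : a ≤ 0) (hz : 0 < z) (hz1 : z < 1) : 0 < qF p a z := by
  have ha1 : a < 1 := lt_of_le_of_lt ha' one_pos
  exact Summable.tsum_pos (summable_qT hp hp1 ha ha' hz hz1)
    (fun n => (qT_pos hp hp1 ha1 hz n).le) 0 (qT_pos hp hp1 ha1 hz 0)

/-- a-recursion at the level of terms. -/
lemma qT_a_rec (n : ℕ) :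
    qT p a z (n + 1) - qT p (a * p) z (n + 1) = -a * z * qT p (a * p) z n := by
  have h1 : qPoch a p (n + 1) - qPoch (a * p) p (n + 1)
      = qPoch (a * p) p n * (a * (p ^ (n + 1) - 1)) := by
    rw [qPoch_succ', qPoch_succ, pow_succ]
    ring
  have h2 : qPoch p p (n + 1) = qPoch p p n * (1 - p ^ (n + 1)) := by
    rw [qPoch_succ]; ring
  have hP := qPoch_pos hp1 hp.le hp1.le n
  have hpn1 : p ^ (n + 1) < 1 := pow_lt_one₀ hp.le hp1 n.succ_ne_zero
  have hne : (1 : ℝ) - p ^ (n + 1) ≠ 0 := by linarith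
  have e : qPoch a p (n + 1)
      = qPoch (a * p) p (n + 1) + qPoch (a * p) p n * (a * (p ^ (n + 1) - 1)) := by
    linarith [h1]
  rw [qT, qT, qT, h2, e, qPoch_succ (a * p) p n]
  field_simp
  ring

/-- z-recursion at the level of terms. -/
lemma qT_z_rec (n : ℕ) :
    qT p a z (n + 1) - qT p a (p * z) (n + 1) = (1 - a) * z * qT p (a * p) z n := by
  have h2 : qPoch p p (n + 1) = qPoch p p n * (1 - p ^ (n + 1)) := by
    rw [qPoch_succ]; ring
  have hP := qPoch_pos hp1 hp.le hp1.le n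
  have hpn1 : p ^ (n + 1) < 1 := pow_lt_one₀ hp.le hp1 n.succ_ne_zero
  have hne : (1 : ℝ) - p ^ (n + 1) ≠ 0 := by linarith
  rw [qT, qT, qT, h2, qPoch_succ' a p n, mul_pow]
  field_simp
  ring

variable (ha : -1 ≤ a) (ha' : a ≤ 0) (hz : 0 < z) (hz1 : z < 1)
include ha ha' hz hz1

lemma qF_a_rec : qF p a z = (1 - a * z) * qF p (a * p) z := by
  have hap : -1 ≤ a * p := by nlinarith
  have hap' : a * p ≤ 0 := by nlinarith
  have hSu : Summable (qT p a z) := summable_qT hp hp1 ha ha' hz hz1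
  have hSv : Summable (qT p (a * p) z) := summable_qT hp hp1 hap hap' hz hz1
  have hdiff : Summable (fun n => qT p a z n - qT p (a * p) z n) := hSu.sub hSv
  have h0 : qT p a z 0 - qT p (a * p) z 0 = 0 := by
    simp [qT, qPoch]
  have key : qF p a z - qF p (a * p) z = -a * z * qF p (a * p) z := by
    rw [qF, qF, ← Summable.tsum_sub hSu hSv, Summable.tsum_eq_zero_add hdiff, h0, zero_add]
    rw [← tsum_mul_left]
    exact tsum_congr fun n => qT_a_rec hp hp1 n
  linarith [key]

lemma qF_z_rec : (1 - z) * qF p a z = (1 - a * z) * qF p a (p * z) := by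
  have hap : -1 ≤ a * p := by nlinarith
  have hap' : a * p ≤ 0 := by nlinarith
  have hpz : 0 < p * z := mul_pos hp hz
  have hpz1 : p * z < 1 := by nlinarith
  have hSu : Summable (qT p a z) := summable_qT hp hp1 ha ha' hz hz1
  have hSv : Summable (qT p a (p * z)) := summable_qT hp hp1 ha ha' hpz hpz1
  have hdiff : Summable (fun n => qT p a z n - qT p a (p * z) n) := hSu.sub hSv
  have h0 : qT p a z 0 - qT p a (p * z) 0 = 0 := by
    simp [qT, qPoch]
  have key : qF p a z - qF p a (p * z) = (1 - a) * z * qF p (a * p) z := by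
    rw [qF, qF, ← Summable.tsum_sub hSu hSv, Summable.tsum_eq_zero_add hdiff, h0, zero_add]
    rw [qF, ← tsum_mul_left]
    exact tsum_congr fun n => qT_z_rec hp hp1 n
  have harec := qF_a_rec hp hp1 ha ha' hz hz1
  have hne : (1 : ℝ) - a * z ≠ 0 := by nlinarith
  have : (1 - a * z) * (qF p a z - qF p a (p * z)) = (1 - a) * z * qF p a z := by
    rw [key, harec]; ring
  nlinarith [this]

end Rec

/-- iterated a-recursion. -/
lemma qF_a_iter {p z : ℝ} (hp : 0 < p) (hp1 : p < 1) (hz : 0 < z) (hz1 : z < 1) (j : ℕ) :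
    qF p (-p) z = qPoch (-(p * z)) p j * qF p (-(p ^ (j + 1))) z := by
  induction j with
  | zero => simp [qPoch]
  | succ j ih =>
    have hple : p ^ (j + 1) ≤ 1 := pow_le_one₀ hp.le hp1.le
    have ha : -1 ≤ -(p ^ (j + 1)) := by linarith
    have ha' : -(p ^ (j + 1)) ≤ 0 := by
      have := pow_pos hp (j + 1); linarith
    have hrec := qF_a_rec hp hp1 ha ha' hz hz1
    have h1 : qF p (-(p ^ (j + 1)) * p) z = qF p (-(p ^ (j + 1 + 1))) z := by
      rw [show -(p ^ (j + 1)) * p = -(p ^ (j + 1 + 1)) from by ring]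
    rw [ih, hrec, h1, qPoch_succ]
    ring

/-- iterated z-recursion. -/
lemma qF_z_iter {p z : ℝ} (hp : 0 < p) (hp1 : p < 1) (hz : 0 < z) (hz1 : z < 1) (m : ℕ) :
    qPoch z p m * qF p (-p) z = qPoch (-(p * z)) p m * qF p (-p) (p ^ m * z) := by
  induction m with
  | zero => simp [qPoch]
  | succ m ih =>
    have hpm : 0 < p ^ m * z := by positivity
    have hpm1 : p ^ m * z < 1 := by
      have h1 : p ^ m ≤ 1 := pow_le_one₀ hp.le hp1.le
      nlinarith
    have ha : -1 ≤ -p := by linarith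
    have ha' : -p ≤ 0 := by linarith
    have hrec := qF_z_rec hp hp1 ha ha' hpm hpm1
    rw [qPoch_succ, qPoch_succ, pow_succ]
    have h1 : qPoch z p m * (1 - z * p ^ m) * qF p (-p) z
        = (1 - z * p ^ m) * (qPoch z p m * qF p (-p) z) := by ring
    rw [h1, ih]
    have h2 : (1 - z * p ^ m) * (qPoch (-(p * z)) p m * qF p (-p) (p ^ m * z))
        = qPoch (-(p * z)) p m * ((1 - p ^ m * z) * qF p (-p) (p ^ m * z)) := by ring
    rw [h2, hrec]
    have h3 : -p * (p ^ m * z) = -(p * z) * p ^ m := by ring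
    rw [h3]
    have h4 : p * (p ^ m * z) = p ^ m * p * z := by ring
    rw [h4]
    ring

/-- the key identity. -/
lemma qF_key {p x : ℝ} (hp : 0 < p) (hp1 : p < 1) (hx : 0 < x) (hx1 : x < 1) (j m : ℕ) :
    qF p (-(p ^ (j + 1))) (p ^ m * x) * qPoch (-(p * x)) p (j + m)
      = qPoch x p m * qF p (-p) x := by
  have hpm : 0 < p ^ m * x := by positivity
  have hpm1 : p ^ m * x < 1 := by
    have h1 : p ^ m ≤ 1 := pow_le_one₀ hp.le hp1.le
    nlinarith
  have h5 := qF_a_iter hp hp1 hpm hpm1 j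
  have h6 := qF_z_iter hp hp1 hx hx1 m
  have hsplit : qPoch (-(p * x)) p (j + m)
      = qPoch (-(p * x)) p m * qPoch (-(p * (p ^ m * x))) p j := by
    rw [add_comm j m, qPoch_add]
    congr 2
    ring
  rw [hsplit, h6, h5]
  ring

lemma prod_sqrt {f : ℕ → ℝ} (j : ℕ) (h : ∀ i ∈ Finset.range j, 0 ≤ f i) :
    ∏ i ∈ Finset.range j, Real.sqrt (f i) = Real.sqrt (∏ i ∈ Finset.range j, f i) := by
  induction j with
  | zero => simp
  | succ j ih =>
    have h' : ∀ i ∈ Finset.range j, 0 ≤ f i := fun i hi =>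
      h i (Finset.mem_range.mpr (lt_of_lt_of_le (Finset.mem_range.mp hi) j.le_succ))
    rw [Finset.prod_range_succ, Finset.prod_range_succ, ih h',
      ← Real.sqrt_mul (Finset.prod_nonneg h')]

lemma kOp_iter (p : ℝ) (v : ℕ → ℂ) (m n : ℕ) :
    (kOp p)^[m] v n = ((p : ℂ) ^ n * ((Real.sqrt p : ℝ) : ℂ)) ^ m * v n := by
  induction m with
  | zero => simp
  | succ m ih =>
    rw [Function.iterate_succ_apply', kOp, ih, pow_succ]
    ring

lemma aMinus_iter (p : ℝ) (v : ℕ → ℂ) (j n : ℕ) :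
    (aMinus p)^[j] v n
      = (∏ i ∈ Finset.range j, ((Real.sqrt (1 - p ^ (2 * (n + i) + 2)) : ℝ) : ℂ))
        * v (n + j) := by
  induction j generalizing n with
  | zero => simp
  | succ j ih =>
    rw [Function.iterate_succ_apply', aMinus, ih (n + 1), Finset.prod_range_succ']
    have hP : (∏ i ∈ Finset.range j,
          ((Real.sqrt (1 - p ^ (2 * (n + 1 + i) + 2)) : ℝ) : ℂ))
        = ∏ i ∈ Finset.range j,
          ((Real.sqrt (1 - p ^ (2 * (n + (i + 1)) + 2)) : ℝ) : ℂ) :=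
      Finset.prod_congr rfl fun i _ => by
        rw [show 2 * (n + 1 + i) + 2 = 2 * (n + (i + 1)) + 2 from by omega]
    rw [hP, show n + 1 + j = n + (j + 1) from by omega,
      show 2 * (n + 0) + 2 = 2 * n + 2 from by omega]
    ring

lemma realterm {p : ℝ} (hp : 0 < p) (hp1 : p < 1) (x : ℝ) (j m n : ℕ) :
    x ^ n * Real.sqrt (qPoch (p ^ 2) (p ^ 2) n) / qPoch p p n *
      ((∏ i ∈ Finset.range j, Real.sqrt (1 - p ^ (2 * (n + i) + 2))) *
       ((p ^ (n + j) * Real.sqrt p) ^ m *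
        (Real.sqrt (qPoch (p ^ 2) (p ^ 2) (n + j)) / qPoch p p (n + j))))
    = Real.sqrt p ^ m * p ^ (j * m) * qPoch (-p) p j
        * qT p (-(p ^ (j + 1))) (p ^ m * x) n := by
  have hp2 : p ^ 2 < 1 := by nlinarith
  have hp20 : (0:ℝ) ≤ p ^ 2 := by positivity
  have hQn : 0 < qPoch (p ^ 2) (p ^ 2) n := qPoch_pos hp2 hp20 hp2.le n
  have hQnj : 0 < qPoch (p ^ 2) (p ^ 2) (n + j) := qPoch_pos hp2 hp20 hp2.le (n + j)
  have hPn : 0 < qPoch p p n := qPoch_pos hp1 hp.le hp1.le n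
  have hPnj : 0 < qPoch p p (n + j) := qPoch_pos hp1 hp.le hp1.le (n + j)
  have hf : ∀ i ∈ Finset.range j, (0:ℝ) ≤ 1 - p ^ (2 * (n + i) + 2) := fun i _ => by
    have : p ^ (2 * (n + i) + 2) ≤ 1 := pow_le_one₀ hp.le hp1.le
    linarith
  have hQadd : qPoch (p ^ 2) (p ^ 2) (n + j)
      = qPoch (p ^ 2) (p ^ 2) n * ∏ i ∈ Finset.range j, (1 - p ^ (2 * (n + i) + 2)) := by
    rw [qPoch_add]
    congr 1
    exact Finset.prod_congr rfl fun i _ => by ring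
  have hsq : Real.sqrt (qPoch (p ^ 2) (p ^ 2) n)
        * ∏ i ∈ Finset.range j, Real.sqrt (1 - p ^ (2 * (n + i) + 2))
      = Real.sqrt (qPoch (p ^ 2) (p ^ 2) (n + j)) := by
    rw [prod_sqrt j hf, ← Real.sqrt_mul hQn.le, ← hQadd]
  have hM : qPoch (p ^ 2) (p ^ 2) (n + j)
      = qPoch p p (n + j) * (qPoch (-p) p j * qPoch (-(p ^ (j + 1))) p n) := by
    have h1 : qPoch (-p) p (n + j) = qPoch (-p) p j * qPoch (-(p ^ (j + 1))) p n := by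
      rw [add_comm n j, qPoch_add, show -p * p ^ j = -(p ^ (j + 1)) from by ring]
    rw [qPoch_sq, h1]
  have key : Real.sqrt (qPoch (p ^ 2) (p ^ 2) n)
        * ((∏ i ∈ Finset.range j, Real.sqrt (1 - p ^ (2 * (n + i) + 2)))
          * Real.sqrt (qPoch (p ^ 2) (p ^ 2) (n + j)))
      = qPoch p p (n + j) * (qPoch (-p) p j * qPoch (-(p ^ (j + 1))) p n) := by
    rw [← mul_assoc, hsq, Real.mul_self_sqrt hQnj.le, hM]
  have hpow : (p ^ (n + j)) ^ m = (p ^ m) ^ n * p ^ (j * m) := by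
    rw [← pow_mul, ← pow_mul, ← pow_add]
    congr 1
    ring
  have main : x ^ n * Real.sqrt (qPoch (p ^ 2) (p ^ 2) n) / qPoch p p n *
      ((∏ i ∈ Finset.range j, Real.sqrt (1 - p ^ (2 * (n + i) + 2))) *
       ((p ^ (n + j) * Real.sqrt p) ^ m *
        (Real.sqrt (qPoch (p ^ 2) (p ^ 2) (n + j)) / qPoch p p (n + j))))
      = (Real.sqrt (qPoch (p ^ 2) (p ^ 2) n)
          * ((∏ i ∈ Finset.range j, Real.sqrt (1 - p ^ (2 * (n + i) + 2)))
            * Real.sqrt (qPoch (p ^ 2) (p ^ 2) (n + j))))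
        * ((p ^ (n + j)) ^ m * (Real.sqrt p ^ m * x ^ n)) / (qPoch p p n * qPoch p p (n + j)) := by
    rw [mul_pow]
    field_simp
  rw [main, key, hpow, qT, mul_pow]
  field_simp

/-- `⟨(a⁻)^j k^m⟩₁₁ = p^{m/2+mj} (-p;p)_j (x;p)_m / (-px;p)_{j+m}`. -/
theorem bracket11_aMinus (p x : ℝ) (hp : 0 < p) (hp1 : p < 1) (hx : 0 < x) (hx1 : x < 1)
    (j m : ℕ) :
    pairF (chi1 p x) ((aMinus p)^[j] ((kOp p)^[m] (chi1 p 1))) /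
        pairF (chi1 p x) (chi1 p 1) =
      ((Real.sqrt p : ℝ) : ℂ) ^ m * (p : ℂ) ^ (m * j) *
        ((qPoch (-p) p j : ℝ) : ℂ) * ((qPoch x p m : ℝ) : ℂ) /
        ((qPoch (-(p * x)) p (j + m) : ℝ) : ℂ) := by
  have hp2 : p ^ 2 < 1 := by nlinarith
  have hp20 : (0:ℝ) ≤ p ^ 2 := by positivity
  have hpm : 0 < p ^ m * x := by positivity
  have hpm1 : p ^ m * x < 1 := by
    have h1 : p ^ m ≤ 1 := pow_le_one₀ hp.le hp1.le
    nlinarith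
  have hple : p ^ (j + 1) ≤ 1 := pow_le_one₀ hp.le hp1.le
  have ha : (-1:ℝ) ≤ -(p ^ (j + 1)) := by linarith
  have ha' : -(p ^ (j + 1)) ≤ 0 := by
    have := pow_pos hp (j + 1); linarith
  -- numerator
  have hterm : ∀ n, chi1 p x n * ((aMinus p)^[j] ((kOp p)^[m] (chi1 p 1)) n)
      = (((Real.sqrt p ^ m * p ^ (j * m) * qPoch (-p) p j
          * qT p (-(p ^ (j + 1))) (p ^ m * x) n : ℝ)) : ℂ) := by
    intro n
    rw [aMinus_iter, kOp_iter, chi1, chi1, ← realterm hp hp1 x j m n]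
    push_cast
    ring
  have hNum : pairF (chi1 p x) ((aMinus p)^[j] ((kOp p)^[m] (chi1 p 1)))
      = (((Real.sqrt p ^ m * p ^ (j * m) * qPoch (-p) p j
          * qF p (-(p ^ (j + 1))) (p ^ m * x) : ℝ)) : ℂ) := by
    rw [pairF, tsum_congr hterm, ← Complex.ofReal_tsum]
    norm_cast
    rw [qF, ← tsum_mul_left]
  -- denominator
  have hterm2 : ∀ n, chi1 p x n * chi1 p 1 n = ((qT p (-p) x n : ℝ) : ℂ) := by
    intro n
    have hQn : 0 < qPoch (p ^ 2) (p ^ 2) n := qPoch_pos hp2 hp20 hp2.le n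
    have hPn : 0 < qPoch p p n := qPoch_pos hp1 hp.le hp1.le n
    have hr2 : x ^ n * Real.sqrt (qPoch (p ^ 2) (p ^ 2) n) / qPoch p p n *
        ((1:ℝ) ^ n * Real.sqrt (qPoch (p ^ 2) (p ^ 2) n) / qPoch p p n)
        = qT p (-p) x n := by
      have hms : Real.sqrt (qPoch (p ^ 2) (p ^ 2) n) * Real.sqrt (qPoch (p ^ 2) (p ^ 2) n)
          = qPoch p p n * qPoch (-p) p n := by
        rw [Real.mul_self_sqrt hQn.le, qPoch_sq]
      calc x ^ n * Real.sqrt (qPoch (p ^ 2) (p ^ 2) n) / qPoch p p n *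
          ((1:ℝ) ^ n * Real.sqrt (qPoch (p ^ 2) (p ^ 2) n) / qPoch p p n)
          = (Real.sqrt (qPoch (p ^ 2) (p ^ 2) n) * Real.sqrt (qPoch (p ^ 2) (p ^ 2) n))
            * x ^ n / (qPoch p p n * qPoch p p n) := by rw [one_pow]; ring
        _ = (qPoch p p n * qPoch (-p) p n) * x ^ n / (qPoch p p n * qPoch p p n) := by
            rw [hms]
        _ = qT p (-p) x n := by rw [qT]; field_simp
    rw [chi1, chi1, ← hr2]
    push_cast
    ring
  have hDen : pairF (chi1 p x) (chi1 p 1) = ((qF p (-p) x : ℝ) : ℂ) := by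
    rw [pairF, tsum_congr hterm2, ← Complex.ofReal_tsum, qF]
  -- assemble
  have hF2 : 0 < qF p (-p) x := qF_pos hp hp1 (by linarith) (by linarith) hx hx1
  have hkey := qF_key hp hp1 hx hx1 j m
  have hPoch : 0 < qPoch (-(p * x)) p (j + m) := qPoch_pos (by nlinarith) hp.le hp1.le _
  rw [hNum, hDen, ← Complex.ofReal_div,
    show ((Real.sqrt p : ℝ) : ℂ) ^ m * (p : ℂ) ^ (m * j) *
        ((qPoch (-p) p j : ℝ) : ℂ) * ((qPoch x p m : ℝ) : ℂ) /
        ((qPoch (-(p * x)) p (j + m) : ℝ) : ℂ)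
      = (((Real.sqrt p ^ m * p ^ (m * j) * qPoch (-p) p j * qPoch x p m
          / qPoch (-(p * x)) p (j + m) : ℝ)) : ℂ) from by push_cast; ring,
    Complex.ofReal_inj]
  field_simp
  linear_combination (p ^ (j * m) * qPoch (-p) p j) * hkey
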